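/- arXiv:2307.02271 — 3 statements merged into one kernel-verified Lean document; each statement's English description precedes it below -/
import Mathlib

section
/- Let λ ∈ ∂𝔻 be an irrational rotation, write ω = 1/conj(λ), let φ ∈ H^∞(𝔻), and let (n_k) be a fixed increasing sequence of positive integers. Let r < 1 and ε > 0 be such that φ has no zeros on the annulus C = {z : r − ε < |z| < r + ε}, and suppose such annuli can be chosen with radii r_n → 1. If for every such annulus and every z₀ with |z₀| = r the family 𝒢 = {Ω_{n_k}} is normal at z₀ and the set {Ω_{n_k}(z₀) : k ≥ 1} is bounded, then the family 𝒢 is uniformly bounded on compact subsets of 𝔻. -/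
open Complex Metric Filter Topology ComplexConjugate

noncomputable section

/-- The Hardy space `H²(𝔻)`, modeled via Taylor coefficients as the sequence space `ℓ²`:
an analytic function `f(z) = Σ aₙ zⁿ` on the unit disk with `Σ |aₙ|² < ∞` is identified
with its coefficient sequence. -/
abbrev H2 := lp (fun _ : ℕ => ℂ) 2

/-- The analytic function on the unit disk represented by an element of `H²`. -/
def H2.toFun (f : H2) (z : ℂ) : ℂ := ∑' n : ℕ, f n * z ^ n

/-- `B` is the backward shift `(Bf)(z) = (f(z) - f(0))/z`, i.e. on Taylor coefficients
`(Bf)ₙ = f_{n+1}`. -/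
def IsBackwardShift (B : H2 →L[ℂ] H2) : Prop :=
  ∀ (f : H2) (n : ℕ), B f n = f (n + 1)

/-- `R` is the dilation operator `(R_λ f)(z) = f(λ z)`, i.e. on Taylor coefficients
`(R_λ f)ₙ = λⁿ fₙ`. -/
def IsDilation (lam : ℂ) (R : H2 →L[ℂ] H2) : Prop :=
  ∀ (f : H2) (n : ℕ), R f n = lam ^ n * f n

/-- `φ ∈ H^∞(𝔻)`: a bounded analytic function on the open unit disk. -/
def InHinf (φ : ℂ → ℂ) : Prop :=
  DifferentiableOn ℂ φ (ball (0:ℂ) 1) ∧ ∃ M : ℝ, ∀ z ∈ ball (0:ℂ) 1, ‖φ z‖ ≤ M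

/-- `Φ = φ(B)`, the coanalytic Toeplitz operator `M_{φ̄}⋆` with symbol `φ`: there is a
Taylor coefficient sequence `c` for `φ` on the disk such that
`(Φ f)ₙ = Σ_k c_k f_{n+k}` (equivalently `Φ = Σ_k c_k B^k`). -/
def IsCoToeplitz (φ : ℂ → ℂ) (Φ : H2 →L[ℂ] H2) : Prop :=
  ∃ c : ℕ → ℂ,
    (∀ z ∈ ball (0:ℂ) 1, HasSum (fun k => c k * z ^ k) (φ z)) ∧
    (∀ (f : H2) (n : ℕ), HasSum (fun k => c k * f (n + k)) (Φ f n))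

/-- An operator `T` is hypercyclic if some vector has dense orbit `{Tⁿ x : n ∈ ℕ}`. -/
def Hypercyclic (T : H2 →L[ℂ] H2) : Prop :=
  ∃ x : H2, Dense (Set.range fun n : ℕ => (T ^ n) x)

/-- An operator `T` is supercyclic if for some vector `x` the set of scalar multiples
`{μ Tⁿ x : μ ∈ ℂ, n ∈ ℕ}` is dense. -/
def Supercyclic (T : H2 →L[ℂ] H2) : Prop :=
  ∃ x : H2, Dense {y : H2 | ∃ (μ : ℂ) (n : ℕ), y = μ • (T ^ n) x}

/-- `φ̄(z) = conj (φ (conj z))`. -/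
def conjSymb (φ : ℂ → ℂ) (z : ℂ) : ℂ := conj (φ (conj z))

/-- `λ` is an irrational rotation: `|λ| = 1` and `λ` is not a root of unity. -/
def IsIrrationalRotation (lam : ℂ) : Prop :=
  ‖lam‖ = 1 ∧ ∀ n : ℕ, 0 < n → lam ^ n ≠ 1

/-- `Ψ_n(z) = φ̄(z)·φ̄(αz)⋯φ̄(α^{n-1}z)` where `α = conj λ`. -/
def psiProd (φ : ℂ → ℂ) (lam : ℂ) (n : ℕ) (z : ℂ) : ℂ :=
  ∏ j ∈ Finset.range n, conjSymb φ ((conj lam) ^ j * z)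

/-- `Ω_n(z) = φ̄(ωz)·φ̄(ω²z)⋯φ̄(ωⁿz)` where `ω = 1/conj λ`. -/
def omegaProd (φ : ℂ → ℂ) (lam : ℂ) (n : ℕ) (z : ℂ) : ℂ :=
  ∏ j ∈ Finset.range n, conjSymb φ (((conj lam)⁻¹) ^ (j + 1) * z)

lemma memℓp_geom {a : ℂ} (ha : ‖a‖ < 1) : Memℓp (fun n : ℕ => (conj a) ^ n) 2 := by
  apply memℓp_gen
  have hs : Summable fun n : ℕ => (‖a‖ ^ 2) ^ n :=
    summable_geometric_of_lt_one (by positivity) (by nlinarith [norm_nonneg a])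
  refine hs.congr fun n => ?_
  rw [norm_pow]
  simp only [RCLike.norm_conj]
  rw [ENNReal.toReal_ofNat, Real.rpow_two]
  ring

/-- The reproducing kernel `k_a(z) = 1/(1 - conj(a) z) = Σ (conj a)ⁿ zⁿ` of `H²(𝔻)`,
as an element of `H²` (junk value `0` if `a` is outside the unit disk). -/
def kernelVec (a : ℂ) : H2 :=
  if ha : ‖a‖ < 1 then ⟨fun n => (conj a) ^ n, memℓp_geom ha⟩ else 0

/-- `T` satisfies the Hypercyclicity Criterion for the sequence `(n_k)`. -/
def SatisfiesHCCriterion (T : H2 →L[ℂ] H2) (nk : ℕ → ℕ) : Prop :=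
  ∃ (X₀ Y₀ : Set H2) (S : ℕ → H2 → H2),
    Dense X₀ ∧ Dense Y₀ ∧
    (∀ x ∈ X₀, Tendsto (fun k => (T ^ nk k) x) atTop (𝓝 0)) ∧
    (∀ y ∈ Y₀, Tendsto (fun k => S k y) atTop (𝓝 0)) ∧
    (∀ y ∈ Y₀, Tendsto (fun k => (T ^ nk k) (S k y)) atTop (𝓝 y))

/-- A family `F` of functions is normal at `z₀`: on some open neighborhood of `z₀`,
every (sub)sequence of the family has a locally uniformly convergent subsequence. -/
def NormalAt (F : ℕ → ℂ → ℂ) (z₀ : ℂ) : Prop :=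
  ∃ U : Set ℂ, IsOpen U ∧ z₀ ∈ U ∧
    ∀ g : ℕ → ℕ, StrictMono g →
      ∃ (h : ℕ → ℕ) (f : ℂ → ℂ), StrictMono h ∧
        TendstoLocallyUniformlyOn (fun j => F (g (h j))) f atTop U

/-- The family `{F n : n ≥ 1}` is uniformly bounded on compact subsets of the unit disk. -/
def UnifBddOnCompacts (F : ℕ → ℂ → ℂ) : Prop :=
  ∀ K : Set ℂ, K ⊆ ball (0:ℂ) 1 → IsCompact K →
    ∃ M : ℝ, ∀ n : ℕ, 1 ≤ n → ∀ z ∈ K, ‖F n z‖ ≤ M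


lemma exists_subseq_of_unbounded (s : ℕ → ℝ) (h : ∀ M : ℝ, ∃ k, M < s k) :
    ∃ g : ℕ → ℕ, StrictMono g ∧ ∀ m : ℕ, (m : ℝ) < s (g m) := by
  choose F hF using h
  set B : ℕ → ℝ := fun n => (Finset.range (n + 1)).sup' Finset.nonempty_range_add_one s with hB
  have hBle : ∀ n j, j ≤ n → s j ≤ B n := fun n j hj =>
    Finset.le_sup' s (Finset.mem_range_succ_iff.mpr hj)
  set g : ℕ → ℕ := fun n => Nat.rec (F 0) (fun m ih => F (max ((m : ℝ) + 1) (B ih))) n with hg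
  have hg0 : g 0 = F 0 := rfl
  have hgs : ∀ m, g (m + 1) = F (max ((m : ℝ) + 1) (B (g m))) := fun m => rfl
  have key : ∀ m : ℕ, max ((m : ℝ) + 1) (B (g m)) < s (g (m + 1)) := by
    intro m; rw [hgs]; exact hF _
  have hlt : ∀ m, g m < g (m + 1) := by
    intro m
    by_contra hcon
    push_neg at hcon
    have := hBle (g m) (g (m + 1)) hcon
    have h2 := key m
    have h3 := le_max_right ((m : ℝ) + 1) (B (g m))
    linarith
  refine ⟨g, strictMono_nat_of_lt_succ hlt, ?_⟩
  intro m
  cases m with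
  | zero => simpa using lt_of_le_of_lt (le_of_eq rfl) (by simpa [hg0] using hF 0)
  | succ m =>
      have := key m
      have h3 := le_max_left ((m : ℝ) + 1) (B (g m))
      push_cast
      linarith

lemma conjSymb_diffOn {φ : ℂ → ℂ} (hφ : DifferentiableOn ℂ φ (ball (0:ℂ) 1)) :
    DifferentiableOn ℂ (conjSymb φ) (ball (0:ℂ) 1) := by
  intro w hw
  have hw' : (conj w : ℂ) ∈ ball (0:ℂ) 1 := by
    rw [mem_ball_zero_iff] at hw ⊢
    simpa using hw
  have hda : DifferentiableAt ℂ φ (conj w) :=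
    hφ.differentiableAt (isOpen_ball.mem_nhds hw')
  obtain ⟨d, hd⟩ : ∃ d, HasDerivAt φ d (conj w) := ⟨deriv φ (conj w), hda.hasDerivAt⟩
  have h1 := hasDerivAt_iff_tendsto.mp hd
  have hc : Tendsto (fun z : ℂ => (conj z : ℂ)) (𝓝 w) (𝓝 (conj w)) :=
    (Complex.continuous_conj).continuousAt
  have h2 := h1.comp hc
  have hder : HasDerivAt (conjSymb φ) (conj d) w := by
    rw [hasDerivAt_iff_tendsto]
    refine h2.congr fun z => ?_
    simp only [Function.comp]
    have e1 : conjSymb φ z - conjSymb φ w - (z - w) • (conj d : ℂ)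
        = conj (φ (conj z) - φ (conj w) - ((conj z : ℂ) - conj w) • d) := by
      simp only [conjSymb, smul_eq_mul, map_sub, map_mul, Complex.conj_conj]
    have e2 : ‖(conj z : ℂ) - conj w‖ = ‖z - w‖ := by
      rw [← map_sub]; exact RCLike.norm_conj _
    rw [e2, e1, RCLike.norm_conj]
  exact hder.differentiableAt.differentiableWithinAt

lemma normalAt_locally_bounded (F : ℕ → ℂ → ℂ) (z₀ : ℂ)
    (hz : NormalAt F z₀) (hcont : ∀ k, ContinuousOn (F k) (ball (0:ℂ) 1))
    (hz1 : z₀ ∈ ball (0:ℂ) 1) :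
    ∃ ρ : ℝ, 0 < ρ ∧ ∃ M : ℝ, ∀ k, ∀ z ∈ closedBall z₀ ρ, ‖F k z‖ ≤ M := by
  obtain ⟨U, hUopen, hz₀U, hsubseq⟩ := hz
  have hVopen : IsOpen (U ∩ ball (0:ℂ) 1) := hUopen.inter isOpen_ball
  have hz₀V : z₀ ∈ U ∩ ball (0:ℂ) 1 := ⟨hz₀U, hz1⟩
  obtain ⟨δ, hδpos, hδsub⟩ := Metric.isOpen_iff.mp hVopen z₀ hz₀V
  set ρ := δ / 2 with hρdef
  have hρpos : 0 < ρ := by positivity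
  set L : Set ℂ := closedBall z₀ ρ with hL
  have hLV : L ⊆ U ∩ ball (0:ℂ) 1 :=
    (closedBall_subset_ball (by linarith)).trans hδsub
  have hLU : L ⊆ U := hLV.trans Set.inter_subset_left
  have hLb : L ⊆ ball (0:ℂ) 1 := hLV.trans Set.inter_subset_right
  have hLc : IsCompact L := isCompact_closedBall z₀ ρ
  have hLne : L.Nonempty := ⟨z₀, mem_closedBall_self hρpos.le⟩
  refine ⟨ρ, hρpos, ?_⟩
  by_contra hcon
  push_neg at hcon
  set s : ℕ → ℝ := fun k => sSup ((fun z => ‖F k z‖) '' L) with hs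
  have hbdd : ∀ k, BddAbove ((fun z => ‖F k z‖) '' L) := fun k =>
    (hLc.image_of_continuousOn (((hcont k).mono hLb).norm)).bddAbove
  have hles : ∀ k, ∀ z ∈ L, ‖F k z‖ ≤ s k := fun k z hzL =>
    le_csSup (hbdd k) (Set.mem_image_of_mem _ hzL)
  have hunb : ∀ M : ℝ, ∃ k, M < s k := by
    intro M
    obtain ⟨k, z, hzL, hMz⟩ := hcon M
    exact ⟨k, lt_of_lt_of_le hMz (hles k z hzL)⟩
  obtain ⟨g, hgmono, hgs⟩ := exists_subseq_of_unbounded s hunb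
  obtain ⟨h, f, hhmono, htluo⟩ := hsubseq g hgmono
  have htuo : TendstoUniformlyOn (fun j => F (g (h j))) f atTop L :=
    (tendstoLocallyUniformlyOn_iff_forall_isCompact hUopen).mp htluo L hLU hLc
  obtain ⟨j₀, hj₀⟩ := Filter.eventually_atTop.mp
    ((Metric.tendstoUniformlyOn_iff.mp htuo) 1 one_pos)
  set C := s (g (h j₀)) with hC
  have hfb : ∀ z ∈ L, ‖f z‖ ≤ C + 1 := by
    intro z hzL
    have h1 := hj₀ j₀ le_rfl z hzL
    have h2 : ‖f z‖ ≤ ‖F (g (h j₀)) z‖ + dist (f z) (F (g (h j₀)) z) := by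
      rw [dist_eq_norm]
      calc ‖f z‖ = ‖F (g (h j₀)) z + (f z - F (g (h j₀)) z)‖ := by ring_nf
        _ ≤ ‖F (g (h j₀)) z‖ + ‖f z - F (g (h j₀)) z‖ := norm_add_le _ _
      
    have := hles (g (h j₀)) z hzL
    linarith
  have hub : ∀ j, j₀ ≤ j → s (g (h j)) ≤ C + 2 := by
    intro j hj
    refine csSup_le (hLne.image _) ?_
    rintro x ⟨z, hzL, rfl⟩
    have h1 := hj₀ j hj z hzL
    have h2 : ‖F (g (h j)) z‖ ≤ ‖f z‖ + dist (f z) (F (g (h j)) z) := by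
      rw [dist_eq_norm]
      calc ‖F (g (h j)) z‖ = ‖f z - (f z - F (g (h j)) z)‖ := by ring_nf
        _ ≤ ‖f z‖ + ‖f z - F (g (h j)) z‖ := norm_sub_le _ _
    have := hfb z hzL
    linarith
  set j := max j₀ (Nat.ceil (C + 2) + 1) with hj
  have h1 : (h j : ℝ) < s (g (h j)) := hgs (h j)
  have h2 : s (g (h j)) ≤ C + 2 := hub j (le_max_left _ _)
  have h3 : (j : ℝ) ≤ (h j : ℝ) := by exact_mod_cast hhmono.le_apply
  have h4 : C + 2 < (j : ℝ) := by
    have : Nat.ceil (C + 2) + 1 ≤ j := le_max_right _ _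
    have h5 : C + 2 ≤ (Nat.ceil (C + 2) : ℝ) := Nat.le_ceil _
    have h6 : ((Nat.ceil (C + 2) + 1 : ℕ) : ℝ) ≤ (j : ℝ) := by exact_mod_cast this
    push_cast at h6
    linarith
  linarith

theorem stmt12 (lam : ℂ) (hlam : IsIrrationalRotation lam)
    (φ : ℂ → ℂ) (hφ : InHinf φ)
    (nk : ℕ → ℕ) (hnk : StrictMono nk) (hpos : ∀ k, 0 < nk k)
    (rs εs : ℕ → ℝ)
    (hr0 : ∀ n, 0 < rs n) (hr1 : ∀ n, rs n < 1) (hε : ∀ n, 0 < εs n)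
    (hsub : ∀ n, rs n + εs n ≤ 1)
    (hnz : ∀ n, ∀ z : ℂ, rs n - εs n < ‖z‖ → ‖z‖ < rs n + εs n → φ z ≠ 0)
    (hto1 : Tendsto rs atTop (𝓝 1))
    (hnormal : ∀ n, ∀ z₀ : ℂ, ‖z₀‖ = rs n →
      NormalAt (fun k => omegaProd φ lam (nk k)) z₀ ∧
      ∃ M : ℝ, ∀ k, ‖omegaProd φ lam (nk k) z₀‖ ≤ M) :
    ∀ K : Set ℂ, K ⊆ ball (0:ℂ) 1 → IsCompact K →
      ∃ M : ℝ, ∀ k, ∀ z ∈ K, ‖omegaProd φ lam (nk k) z‖ ≤ M := by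
  intro K hK hKc
  rcases K.eq_empty_or_nonempty with rfl | hKne
  · exact ⟨0, fun k z hz => absurd hz (Set.notMem_empty z)⟩
  obtain ⟨zstar, hzstarK, hmax⟩ := hKc.exists_isMaxOn hKne continuous_norm.continuousOn
  set ρK := ‖zstar‖ with hρK
  have hρK1 : ρK < 1 := by simpa [mem_ball_zero_iff] using hK hzstarK
  obtain ⟨n, hn⟩ : ∃ n, ρK < rs n :=
    (hto1.eventually (eventually_gt_nhds hρK1)).exists
  set r := rs n with hr
  have hrpos : 0 < r := hr0 n
  have hrlt1 : r < 1 := hr1 n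
  -- differentiability of the products
  have hdiff : ∀ m : ℕ, DifferentiableOn ℂ (omegaProd φ lam m) (ball (0:ℂ) 1) := by
    intro m
    have hfac : ∀ c : ℂ, ‖c‖ = 1 →
        DifferentiableOn ℂ (fun z => conjSymb φ (c * z)) (ball (0:ℂ) 1) := by
      intro c hc
      refine (conjSymb_diffOn hφ.1).comp ((differentiable_id.const_mul c).differentiableOn) ?_
      intro z hz
      rw [mem_ball_zero_iff] at hz ⊢
      simpa [norm_mul, hc] using hz
    have : DifferentiableOn ℂ (fun z => ∏ j ∈ Finset.range m,
        conjSymb φ (((conj lam)⁻¹) ^ (j + 1) * z)) (ball (0:ℂ) 1) := by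
      apply DifferentiableOn.fun_finsetProd
      intro j _
      apply hfac
      simp [norm_pow, norm_inv, RCLike.norm_conj, hlam.1]
    exact this
  have hcont : ∀ k : ℕ, ContinuousOn (omegaProd φ lam (nk k)) (ball (0:ℂ) 1) :=
    fun k => (hdiff (nk k)).continuousOn
  -- local bounds around each point of the sphere
  have hloc : ∀ z₀ ∈ sphere (0:ℂ) r, ∃ ρ : ℝ, 0 < ρ ∧ ∃ M : ℝ,
      ∀ k, ∀ z ∈ closedBall z₀ ρ, ‖omegaProd φ lam (nk k) z‖ ≤ M := by
    intro z₀ hz₀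
    have hz₀n : ‖z₀‖ = r := by simpa using mem_sphere_zero_iff_norm.mp hz₀
    have hz₀b : z₀ ∈ ball (0:ℂ) 1 := by rw [mem_ball_zero_iff, hz₀n]; exact hrlt1
    exact normalAt_locally_bounded _ z₀ ((hnormal n z₀ hz₀n).1) hcont hz₀b
  choose! ρ hρpos M hM using hloc
  -- finite subcover of the sphere
  have hsc : IsCompact (sphere (0:ℂ) r) := isCompact_sphere 0 r
  obtain ⟨t, htcov⟩ := hsc.elim_nhds_subcover' (fun x hx => ball x (ρ x))
    (fun x hx => ball_mem_nhds x (hρpos x hx))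
  have hsphne : (sphere (0:ℂ) r).Nonempty :=
    NormedSpace.sphere_nonempty.mpr hrpos.le
  have htne : t.Nonempty := by
    rcases hsphne with ⟨z₁, hz₁⟩
    have := htcov hz₁
    rw [Set.mem_iUnion₂] at this
    obtain ⟨x, hx, _⟩ := this
    exact ⟨x, hx⟩
  set Msph := t.sup' htne (fun x => M x.1) with hMsph
  have hsphb : ∀ k, ∀ z ∈ sphere (0:ℂ) r, ‖omegaProd φ lam (nk k) z‖ ≤ Msph := by
    intro k z hz
    have := htcov hz
    rw [Set.mem_iUnion₂] at this
    obtain ⟨x, hx, hzx⟩ := this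
    have h1 : z ∈ closedBall (x : ℂ) (ρ x) := ball_subset_closedBall hzx
    have h2 := hM x.1 x.2 k z h1
    exact h2.trans (Finset.le_sup' (fun y => M y.1) hx)
  -- maximum modulus principle
  refine ⟨Msph, fun k z hzK => ?_⟩
  have hballb : Bornology.IsBounded (ball (0:ℂ) r) := isBounded_ball
  have hcl : closure (ball (0:ℂ) r) = closedBall (0:ℂ) r := closure_ball 0 hrpos.ne'
  have hcb : closedBall (0:ℂ) r ⊆ ball (0:ℂ) 1 := closedBall_subset_ball hrlt1
  have hdc : DiffContOnCl ℂ (omegaProd φ lam (nk k)) (ball (0:ℂ) r) := by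
    refine ⟨(hdiff (nk k)).mono (ball_subset_ball hrlt1.le |>.trans ?_), ?_⟩
    · exact fun x hx => hx
    · rw [hcl]
      exact (hcont k).mono hcb
  have hfr : ∀ w ∈ frontier (ball (0:ℂ) r), ‖omegaProd φ lam (nk k) w‖ ≤ Msph := by
    intro w hw
    rw [frontier_ball 0 hrpos.ne'] at hw
    exact hsphb k w hw
  have hzcl : z ∈ closure (ball (0:ℂ) r) := by
    rw [hcl, mem_closedBall_zero_iff]
    have : ‖z‖ ≤ ρK := hmax hzK
    linarith
  exact Complex.norm_le_of_forall_mem_frontier_norm_le hballb hdc hfr hzcl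
end
end

section
/- Let φ ∈ H²(𝔻) with φ(0) = 1 and let λ ∈ ℂ with |λ| < 1. Define Φ_n(z) = φ(z)·φ(λz)·⋯·φ(λ^{n−1}z). Then Φ_n ∈ H²(𝔻) for every n ≥ 1, and there exists h ∈ H²(𝔻), h ≠ 0, such that ‖Φ_n − h‖₂ → 0 as n → ∞ (moreover the infinite product ∏_{n≥1} φ(λ^{n−1}z) converges uniformly on compact subsets of 𝔻 to h). -/
open Complex Metric Filter Topology ComplexConjugate

noncomputable section

namespace Stmt18aux

open scoped ENNReal

lemma coeff_norm_le (f : H2) (n : ℕ) : ‖f n‖ ≤ ‖f‖ :=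
  lp.norm_apply_le_norm (by norm_num) f n

lemma summable_eval (f : H2) {z : ℂ} (hz : ‖z‖ < 1) :
    Summable fun n : ℕ => ‖f n * z ^ n‖ := by
  refine Summable.of_nonneg_of_le (fun n => norm_nonneg _) (fun n => ?_)
    ((summable_geometric_of_lt_one (norm_nonneg z) hz).mul_left ‖f‖)
  rw [norm_mul, norm_pow]
  exact mul_le_mul_of_nonneg_right (coeff_norm_le f n) (by positivity)

lemma ev_bound (f : H2) {z : ℂ} (hz : ‖z‖ < 1) :
    ‖∑' n : ℕ, f n * z ^ n‖ ≤ (1 - ‖z‖)⁻¹ * ‖f‖ := by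
  refine (norm_tsum_le_tsum_norm (summable_eval f hz)).trans ?_
  have h1 : ∑' n : ℕ, ‖f‖ * ‖z‖ ^ n = ‖f‖ * (1 - ‖z‖)⁻¹ := by
    rw [tsum_mul_left, tsum_geometric_of_lt_one (norm_nonneg z) hz]
  rw [mul_comm (1 - ‖z‖)⁻¹, ← h1]
  refine Summable.tsum_le_tsum (fun n => ?_) (summable_eval f hz)
    ((summable_geometric_of_lt_one (norm_nonneg z) hz).mul_left ‖f‖)
  rw [norm_mul, norm_pow]
  exact mul_le_mul_of_nonneg_right (coeff_norm_le f n) (by positivity)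

/-- Evaluation at a point of the disk as a continuous linear functional. -/
def evL (z : ℂ) (hz : ‖z‖ < 1) : H2 →L[ℂ] ℂ :=
  LinearMap.mkContinuous
    { toFun := fun f => ∑' n : ℕ, f n * z ^ n
      map_add' := fun f g => by
        simp only [lp.coeFn_add, Pi.add_apply, add_mul]
        exact Summable.tsum_add (Summable.of_norm (summable_eval f hz))
          (Summable.of_norm (summable_eval g hz))
      map_smul' := fun c f => by
        simp only [lp.coeFn_smul, Pi.smul_apply, smul_eq_mul, RingHom.id_apply,
          ← tsum_mul_left, mul_assoc] }
    ((1 - ‖z‖)⁻¹) (fun f => ev_bound f hz)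

lemma evL_apply (z : ℂ) (hz : ‖z‖ < 1) (f : H2) : evL z hz f = H2.toFun f z := rfl

def shiftFun (k : ℕ) (f : ℕ → ℂ) : ℕ → ℂ := fun n => if k ≤ n then f (n - k) else 0

lemma shiftFun_add (k : ℕ) (f : ℕ → ℂ) (n : ℕ) : shiftFun k f (n + k) = f n := by
  simp [shiftFun]

lemma shiftFun_of_lt {k n : ℕ} (f : ℕ → ℂ) (h : n < k) : shiftFun k f n = 0 := by
  simp [shiftFun, Nat.not_le.mpr h]

lemma support_subset {α : Type*} [Zero α] (k : ℕ) (f : ℕ → ℂ) (h : ℕ → ℂ → α)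
    (h0 : ∀ n, h n 0 = 0) :
    (Function.support fun n => h n (shiftFun k f n)) ⊆ Set.range (fun n : ℕ => n + k) := by
  intro n hn
  rcases Nat.lt_or_ge n k with hlt | hge
  · exact absurd (show h n (shiftFun k f n) = 0 by rw [shiftFun_of_lt f hlt]; exact h0 n) hn
  · exact ⟨n - k, show n - k + k = n by omega⟩

lemma tsum_shift {α : Type*} [AddCommMonoid α] [TopologicalSpace α] [T2Space α]
    (k : ℕ) (f : ℕ → ℂ) (h : ℂ → α) (h0 : h 0 = 0) :
    ∑' n, h (shiftFun k f n) = ∑' n, h (f n) := by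
  have := Function.Injective.tsum_eq (add_left_injective k)
    (f := fun n => h (shiftFun k f n)) (support_subset k f (fun _ x => h x) (fun _ => h0))
  rw [← this]
  exact tsum_congr fun n => by show h (shiftFun k f (n + k)) = h (f n); rw [shiftFun_add]

lemma summable_shift_aux (k : ℕ) (f : H2) :
    Summable fun n => ‖shiftFun k (⇑f) n‖ ^ (2 : ℝ≥0∞).toReal := by
  have hf : Summable fun n => ‖f n‖ ^ (2 : ℝ≥0∞).toReal :=
    (memℓp_gen_iff (by norm_num)).mp (lp.memℓp f)
  refine (summable_nat_add_iff k).mp (hf.congr fun n => ?_)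
  rw [shiftFun_add]

def shiftH (k : ℕ) (f : H2) : H2 :=
  ⟨shiftFun k (⇑f), memℓp_gen (summable_shift_aux k f)⟩

lemma shiftH_apply (k : ℕ) (f : H2) (n : ℕ) : shiftH k f n = shiftFun k (⇑f) n := rfl

lemma norm_shiftH (k : ℕ) (f : H2) : ‖shiftH k f‖ = ‖f‖ := by
  rw [lp.norm_eq_tsum_rpow (by norm_num) f, lp.norm_eq_tsum_rpow (by norm_num) (shiftH k f)]
  congr 1
  exact tsum_shift k (⇑f) (fun x => ‖x‖ ^ (2 : ℝ≥0∞).toReal)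
    (by show ‖(0:ℂ)‖ ^ (2:ℝ≥0∞).toReal = 0; rw [norm_zero]; simp [Real.zero_rpow])

lemma shiftH_zero (f : H2) : shiftH 0 f = f := by
  apply Subtype.ext
  funext n
  simp [shiftH, shiftFun]

lemma evL_shiftH (z : ℂ) (hz : ‖z‖ < 1) (k : ℕ) (f : H2) :
    evL z hz (shiftH k f) = z ^ k * evL z hz f := by
  have hsupp : (Function.support fun n => shiftFun k (⇑f) n * z ^ n)
      ⊆ Set.range (fun n : ℕ => n + k) :=
    support_subset k (⇑f) (fun n x => x * z ^ n) (fun n => zero_mul _)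
  have := Function.Injective.tsum_eq (add_left_injective k)
    (f := fun n => shiftFun k (⇑f) n * z ^ n) hsupp
  show (∑' n, shiftFun k (⇑f) n * z ^ n) = _
  rw [← this]
  have : ∀ n : ℕ, shiftFun k (⇑f) (n + k) * z ^ (n + k) = z ^ k * (f n * z ^ n) := by
    intro n; rw [shiftFun_add, pow_add]; ring
  rw [tsum_congr this, tsum_mul_left]
  rfl

lemma summable_smul_shift {b : ℕ → ℂ} (hb : Summable fun k => ‖b k‖) (f : H2) :
    Summable fun k => b k • shiftH k f := by
  apply Summable.of_norm
  refine (hb.mul_right ‖f‖).congr fun k => ?_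
  rw [norm_smul, norm_shiftH]

/-- Multiplication operator by the power series with coefficients `b`. -/
def mulOp (b : ℕ → ℂ) (f : H2) : H2 := ∑' k, b k • shiftH k f

lemma evL_mulOp {b : ℕ → ℂ} (hb : Summable fun k => ‖b k‖) (f : H2)
    (z : ℂ) (hz : ‖z‖ < 1) :
    evL z hz (mulOp b f) = (∑' k, b k * z ^ k) * evL z hz f := by
  rw [mulOp, (evL z hz).map_tsum (summable_smul_shift hb f)]
  have : ∀ k : ℕ, evL z hz (b k • shiftH k f) = b k * z ^ k * evL z hz f := by
    intro k
    rw [map_smul, smul_eq_mul, evL_shiftH]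
    ring
  rw [tsum_congr this, tsum_mul_right]

lemma norm_mulOp_sub {b : ℕ → ℂ} (hb : Summable fun k => ‖b k‖) (hb0 : b 0 = 1) (f : H2) :
    ‖mulOp b f - f‖ ≤ (∑' k, ‖b (k + 1)‖) * ‖f‖ := by
  have hs := summable_smul_shift hb f
  have htail : Summable fun k => ‖b (k + 1) • shiftH (k + 1) f‖ := by
    refine (((summable_nat_add_iff 1).mpr hb).mul_right ‖f‖).congr fun k => ?_
    rw [norm_smul, norm_shiftH]
  rw [mulOp, Summable.tsum_eq_zero_add hs, hb0, one_smul, shiftH_zero, add_sub_cancel_left]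
  refine (norm_tsum_le_tsum_norm htail).trans ?_
  rw [← tsum_mul_right]
  exact Summable.tsum_le_tsum (fun k => by rw [norm_smul, norm_shiftH]) htail
    (((summable_nat_add_iff 1).mpr hb).mul_right ‖f‖)

end Stmt18aux

namespace Stmt18aux

open scoped ENNReal

lemma coeffs_summable (φ : H2) {w : ℂ} (hw : ‖w‖ < 1) :
    Summable fun k => ‖φ k * w ^ k‖ := by
  refine Summable.of_nonneg_of_le (fun n => norm_nonneg _) (fun n => ?_)
    ((summable_geometric_of_lt_one (norm_nonneg w) hw).mul_left ‖φ‖)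
  rw [norm_mul, norm_pow]
  exact mul_le_mul_of_nonneg_right (coeff_norm_le φ n) (by positivity)

lemma coeffs_tail (φ : H2) {w : ℂ} (hw : ‖w‖ < 1) :
    ∑' k, ‖φ (k + 1) * w ^ (k + 1)‖ ≤ ‖φ‖ * ‖w‖ * (1 - ‖w‖)⁻¹ := by
  have hgeo : Summable fun k : ℕ => ‖φ‖ * ‖w‖ * ‖w‖ ^ k :=
    (summable_geometric_of_lt_one (norm_nonneg w) hw).mul_left (‖φ‖ * ‖w‖)
  have h1 : (∑' k : ℕ, ‖φ‖ * ‖w‖ * ‖w‖ ^ k) = ‖φ‖ * ‖w‖ * (1 - ‖w‖)⁻¹ := by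
    rw [tsum_mul_left, tsum_geometric_of_lt_one (norm_nonneg w) hw]
  rw [← h1]
  refine Summable.tsum_le_tsum (fun k => ?_) ((summable_nat_add_iff 1).mpr (coeffs_summable φ hw)) hgeo
  rw [norm_mul, norm_pow, pow_succ, mul_comm (‖w‖ ^ k) ‖w‖, ← mul_assoc]
  exact mul_le_mul_of_nonneg_right
    (mul_le_mul_of_nonneg_right (coeff_norm_le φ (k + 1)) (norm_nonneg w)) (by positivity)

def phiAux (φ : H2) (lam : ℂ) : ℕ → H2
  | 0 => φ
  | (m + 1) => mulOp (fun k => φ k * (lam ^ (m + 1)) ^ k) (phiAux φ lam m)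

lemma norm_pow_succ_lt {lam : ℂ} (hlam : ‖lam‖ < 1) (m : ℕ) : ‖lam ^ (m + 1)‖ < 1 := by
  rw [norm_pow]
  exact pow_lt_one₀ (norm_nonneg lam) hlam (Nat.succ_ne_zero m)

lemma phiAux_toFun (φ : H2) {lam : ℂ} (hlam : ‖lam‖ < 1) (m : ℕ) {z : ℂ} (hz : ‖z‖ < 1) :
    H2.toFun (phiAux φ lam m) z = ∏ j ∈ Finset.range (m + 1), H2.toFun φ (lam ^ j * z) := by
  induction m with
  | zero => simp [phiAux, Finset.prod_range_one]
  | succ m ih =>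
    rw [Finset.prod_range_succ, ← ih, mul_comm]
    show evL z hz (mulOp (fun k => φ k * (lam ^ (m + 1)) ^ k) (phiAux φ lam m)) = _
    rw [evL_mulOp (coeffs_summable φ (norm_pow_succ_lt hlam m)) _ z hz, evL_apply]
    congr 1
    show (∑' k : ℕ, φ k * (lam ^ (m + 1)) ^ k * z ^ k) = H2.toFun φ (lam ^ (m + 1) * z)
    exact tsum_congr fun k => by rw [mul_pow, mul_assoc]

def oneH2 : H2 := lp.single 2 0 1

lemma toFun_oneH2 (z : ℂ) : H2.toFun oneH2 z = 1 := by
  rw [H2.toFun, tsum_eq_single 0 ?_]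
  · simp [oneH2, lp.single_apply]
  · intro n hn
    simp [oneH2, lp.single_apply, hn]

end Stmt18aux

open Stmt18aux in
theorem stmt18 (φ : H2) (hφ0 : H2.toFun φ 0 = 1)
    (lam : ℂ) (hlam : ‖lam‖ < 1) :
    ∃ Φ : ℕ → H2,
      (∀ n : ℕ, ∀ z ∈ ball (0:ℂ) 1,
        H2.toFun (Φ n) z = ∏ j ∈ Finset.range n, H2.toFun φ (lam ^ j * z)) ∧
      ∃ h : H2, h ≠ 0 ∧ Tendsto (fun n => ‖Φ n - h‖) atTop (𝓝 0) ∧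
        TendstoLocallyUniformlyOn
          (fun n z => ∏ j ∈ Finset.range n, H2.toFun φ (lam ^ j * z))
          (H2.toFun h) atTop (ball (0:ℂ) 1) := by
  have hφc : (φ : ℕ → ℂ) 0 = 1 := by
    have h1 : H2.toFun φ 0 = φ 0 := by
      rw [H2.toFun, tsum_eq_single 0 (fun n hn => by rw [zero_pow hn, mul_zero])]
      rw [pow_zero, mul_one]
    rw [← h1, hφ0]
  set r := ‖lam‖ with hr
  have hr0 : 0 ≤ r := norm_nonneg lam
  have h1r : 0 < 1 - r := by linarith
  set K := ‖φ‖ * (1 - r)⁻¹ with hK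
  have hK0 : 0 ≤ K := by positivity
  set ε : ℕ → ℝ := fun m => K * r ^ (m + 1) with hε
  have hε0 : ∀ m, 0 ≤ ε m := fun m => by positivity
  have hεsum : Summable ε := by
    refine ((summable_geometric_of_lt_one hr0 hlam).mul_left (K * r)).congr fun m => ?_
    rw [hε]; simp only []; rw [pow_succ']; ring
  have step : ∀ m, ‖phiAux φ lam (m + 1) - phiAux φ lam m‖ ≤ ε m * ‖phiAux φ lam m‖ := by
    intro m
    have hw : ‖lam ^ (m + 1)‖ < 1 := norm_pow_succ_lt hlam m
    have hb : Summable fun k => ‖φ k * (lam ^ (m + 1)) ^ k‖ := coeffs_summable φ hw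
    have hb0 : (fun k => (φ : ℕ → ℂ) k * (lam ^ (m + 1)) ^ k) 0 = 1 := by
      simp [hφc]
    have h1 := norm_mulOp_sub hb hb0 (phiAux φ lam m)
    refine le_trans h1 ?_
    refine mul_le_mul_of_nonneg_right ?_ (norm_nonneg _)
    refine (coeffs_tail φ hw).trans ?_
    rw [norm_pow]
    have hpow_le : r ^ (m + 1) ≤ r := by
      calc r ^ (m + 1) ≤ r ^ 1 := pow_le_pow_of_le_one hr0 (le_of_lt hlam) (by omega)
        _ = r := pow_one r
    have hinv : (1 - r ^ (m + 1))⁻¹ ≤ (1 - r)⁻¹ :=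
      inv_anti₀ h1r (by linarith)
    calc ‖φ‖ * r ^ (m + 1) * (1 - r ^ (m + 1))⁻¹
        ≤ ‖φ‖ * r ^ (m + 1) * (1 - r)⁻¹ :=
          mul_le_mul_of_nonneg_left hinv (by positivity)
      _ = ε m := by rw [hε, hK]; ring
  have bnd : ∀ m, ‖phiAux φ lam m‖ ≤ ‖φ‖ * Real.exp (∑ j ∈ Finset.range m, ε j) := by
    intro m
    induction m with
    | zero => simp [phiAux]
    | succ m ih =>
      have h2 : ‖phiAux φ lam (m + 1)‖ ≤ (1 + ε m) * ‖phiAux φ lam m‖ := by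
        have h3 : ‖phiAux φ lam (m + 1)‖ ≤ ‖phiAux φ lam m‖ + ‖phiAux φ lam (m + 1) - phiAux φ lam m‖ :=
          norm_le_insert' _ _
        nlinarith [step m, norm_nonneg (phiAux φ lam m)]
      calc ‖phiAux φ lam (m + 1)‖ ≤ (1 + ε m) * ‖phiAux φ lam m‖ := h2
        _ ≤ Real.exp (ε m) * (‖φ‖ * Real.exp (∑ j ∈ Finset.range m, ε j)) :=
            mul_le_mul (by linarith [Real.add_one_le_exp (ε m)]) ih (norm_nonneg _)
              (Real.exp_pos _).le
        _ = ‖φ‖ * Real.exp (∑ j ∈ Finset.range (m + 1), ε j) := by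
            rw [Finset.sum_range_succ, Real.exp_add]; ring
  set C := ‖φ‖ * Real.exp (∑' m, ε m) with hC
  have hC0 : 0 ≤ C := by positivity
  have bndC : ∀ m, ‖phiAux φ lam m‖ ≤ C := by
    intro m
    refine (bnd m).trans ?_
    exact mul_le_mul_of_nonneg_left (Real.exp_le_exp.mpr
      (Summable.sum_le_tsum _ (fun i _ => hε0 i) hεsum)) (norm_nonneg (φ : H2))
  have hcauchy : CauchySeq (phiAux φ lam) := by
    apply cauchySeq_of_dist_le_of_summable (fun m => ε m * C) (fun m => ?_) (hεsum.mul_right C)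
    rw [dist_eq_norm, norm_sub_rev]
    exact (step m).trans (mul_le_mul_of_nonneg_left (bndC m) (hε0 m))
  obtain ⟨h, hlim⟩ := cauchySeq_tendsto_of_complete hcauchy
  set Φf : ℕ → H2 := fun n => Nat.casesOn (motive := fun _ => H2) n oneH2 (phiAux φ lam)
    with hΦf
  have hprod : ∀ (n : ℕ), ∀ z ∈ ball (0:ℂ) 1,
      H2.toFun (Φf n) z = ∏ j ∈ Finset.range n, H2.toFun φ (lam ^ j * z) := by
    intro n z hz
    have hz1 : ‖z‖ < 1 := mem_ball_zero_iff.mp hz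
    cases n with
    | zero => rw [Finset.prod_range_zero]; exact toFun_oneH2 z
    | succ m => exact phiAux_toFun φ hlam m hz1
  have hlimΦ : Tendsto Φf atTop (𝓝 h) :=
    (Filter.tendsto_add_atTop_iff_nat 1).mp hlim
  have hnorm0 : Tendsto (fun n => ‖Φf n - h‖) atTop (𝓝 0) :=
    tendsto_iff_norm_sub_tendsto_zero.mp hlimΦ
  have hz0 : ‖(0:ℂ)‖ < 1 := by simp
  have hne0 : h ≠ 0 := by
    have hev : Tendsto (fun m => evL 0 hz0 (phiAux φ lam m)) atTop (𝓝 (evL 0 hz0 h)) :=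
      ((evL 0 hz0).continuous.tendsto h).comp hlim
    have hconst : ∀ m, evL 0 hz0 (phiAux φ lam m) = 1 := by
      intro m
      rw [evL_apply, phiAux_toFun φ hlam m hz0]
      exact Finset.prod_eq_one fun j _ => by rw [mul_zero, hφ0]
    have h1 : Tendsto (fun m => evL 0 hz0 (phiAux φ lam m)) atTop (𝓝 1) := by
      simp only [hconst]; exact tendsto_const_nhds
    have hval : evL 0 hz0 h = 1 := tendsto_nhds_unique hev h1
    intro hh
    rw [hh, map_zero] at hval
    exact zero_ne_one hval
  refine ⟨Φf, hprod, h, hne0, hnorm0, ?_⟩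
  rw [tendstoLocallyUniformlyOn_iff_forall_isCompact isOpen_ball]
  intro K hKs hKc
  rcases K.eq_empty_or_nonempty with rfl | hne
  · rw [Metric.tendstoUniformlyOn_iff]
    intro δ hδ
    filter_upwards with n x hx
    exact absurd hx (Set.notMem_empty x)
  obtain ⟨z₀, hz₀K, hmax⟩ := hKc.exists_isMaxOn hne continuous_norm.continuousOn
  have hρ : ‖z₀‖ < 1 := mem_ball_zero_iff.mp (hKs hz₀K)
  have h1ρ : 0 < 1 - ‖z₀‖ := by linarith
  rw [Metric.tendstoUniformlyOn_iff]
  intro δ hδ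
  have hev2 : ∀ᶠ n in atTop, ‖Φf n - h‖ < δ * (1 - ‖z₀‖) :=
    hnorm0.eventually_lt_const (by positivity)
  filter_upwards [hev2] with n hn z hzK
  have hz1 : ‖z‖ < 1 := mem_ball_zero_iff.mp (hKs hzK)
  have hzρ : ‖z‖ ≤ ‖z₀‖ := hmax hzK
  rw [dist_eq_norm, ← hprod n z (hKs hzK)]
  have heq : H2.toFun h z - H2.toFun (Φf n) z = evL z hz1 (h - Φf n) := by
    rw [map_sub, evL_apply, evL_apply]
  rw [heq]
  calc ‖evL z hz1 (h - Φf n)‖ ≤ (1 - ‖z‖)⁻¹ * ‖h - Φf n‖ := ev_bound _ hz1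
    _ ≤ (1 - ‖z₀‖)⁻¹ * ‖h - Φf n‖ :=
        mul_le_mul_of_nonneg_right (inv_anti₀ h1ρ (by linarith)) (norm_nonneg _)
    _ < (1 - ‖z₀‖)⁻¹ * (δ * (1 - ‖z₀‖)) := by
        refine mul_lt_mul_of_pos_left ?_ (inv_pos.mpr h1ρ)
        rw [norm_sub_rev]; exact hn
    _ = δ := by rw [mul_comm δ, ← mul_assoc, inv_mul_cancel₀ h1ρ.ne', one_mul]
end
end

section
/- Let λ ∈ ℂ with 0 < |λ| < 1, let φ ∈ H²(𝔻) with φ(0) ≠ 0, and let T = R_λ φ(B) be the corresponding bounded extended λ-eigenoperator of B on H²(𝔻) (equivalently, T* = M_{φ̄} R_{conj(λ)}). Then T is not supercyclic on H²(𝔻). -/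
open Complex Metric Filter Topology ComplexConjugate

noncomputable section

set_option maxHeartbeats 2000000

section SC19aux

local notation "⟪" x ", " y "⟫" => @inner ℂ _ _ x y



lemma summable_norm_cmp (f : ℕ → ℂ) (M : ℝ) (hM : ∀ n, ‖f n‖ ≤ M)
    {z : ℂ} (hz : ‖z‖ < 1) : Summable fun n => ‖f n * z ^ n‖ := by
  refine Summable.of_nonneg_of_le (fun n => norm_nonneg _) (fun n => ?_)
    ((summable_geometric_of_lt_one (norm_nonneg z) hz).mul_left M)
  rw [norm_mul, norm_pow]
  exact mul_le_mul_of_nonneg_right (hM n) (by positivity)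

lemma norm_tsum_cmp (f : ℕ → ℂ) (M : ℝ) (hM : ∀ n, ‖f n‖ ≤ M)
    {z : ℂ} (hz : ‖z‖ < 1) : ‖∑' n, f n * z ^ n‖ ≤ M * (1 - ‖z‖)⁻¹ := by
  refine (norm_tsum_le_tsum_norm (summable_norm_cmp f M hM hz)).trans ?_
  have h1 : ∑' n : ℕ, ‖f n * z ^ n‖ ≤ ∑' n : ℕ, M * ‖z‖ ^ n := by
    refine Summable.tsum_le_tsum (fun n => ?_) (summable_norm_cmp f M hM hz)
      ((summable_geometric_of_lt_one (norm_nonneg z) hz).mul_left M)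
    rw [norm_mul, norm_pow]
    exact mul_le_mul_of_nonneg_right (hM n) (by positivity)
  rwa [tsum_mul_left, tsum_geometric_of_lt_one (norm_nonneg z) hz] at h1

lemma tsum_split (f : ℕ → ℂ) (M : ℝ) (hM : ∀ n, ‖f n‖ ≤ M)
    {z : ℂ} (hz : ‖z‖ < 1) :
    ∑' n, f n * z ^ n = f 0 + z * ∑' n, f (n + 1) * z ^ n := by
  have hs : Summable fun n => f n * z ^ n := (summable_norm_cmp f M hM hz).of_norm
  rw [Summable.tsum_eq_zero_add hs]
  simp only [pow_zero, mul_one]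
  congr 1
  rw [← tsum_mul_left]
  exact tsum_congr fun n => by ring





lemma vanish_step (f : ℕ → ℂ) (M : ℝ) (hM : ∀ n, ‖f n‖ ≤ M)
    (h : ∀ z : ℂ, 0 < ‖z‖ → ‖z‖ < 2⁻¹ → ∑' n, f n * z ^ n = 0) :
    f 0 = 0 ∧ ∀ z : ℂ, 0 < ‖z‖ → ‖z‖ < 2⁻¹ → ∑' n, f (n + 1) * z ^ n = 0 := by
  have hM0 : 0 ≤ M := le_trans (norm_nonneg _) (hM 0)
  have key : ∀ z : ℂ, 0 < ‖z‖ → ‖z‖ < 2⁻¹ →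
      f 0 + z * ∑' n, f (n + 1) * z ^ n = 0 := by
    intro z h1 h2
    rw [← tsum_split f M hM (h2.trans (by norm_num))]
    exact h z h1 h2
  have tailbound : ∀ z : ℂ, ‖z‖ < 2⁻¹ → ‖∑' n, f (n + 1) * z ^ n‖ ≤ 2 * M := by
    intro z h2
    refine (norm_tsum_cmp (fun n => f (n+1)) M (fun n => hM _) (h2.trans (by norm_num))).trans ?_
    have h3 : (1 : ℝ) - ‖z‖ ≥ 2⁻¹ := by linarith
    have h4 : (1 - ‖z‖)⁻¹ ≤ 2 := by
      rw [inv_le_comm₀ (by linarith) (by norm_num)]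
      linarith
    calc M * (1 - ‖z‖)⁻¹ ≤ M * 2 := mul_le_mul_of_nonneg_left h4 hM0
    _ = 2 * M := by ring
  have h0 : f 0 = 0 := by
    by_contra h0
    have hf0 : 0 < ‖f 0‖ := norm_pos_iff.mpr h0
    set t : ℝ := min 4⁻¹ (‖f 0‖ / (2 * M + 1)) with ht
    have htpos : 0 < t := lt_min (by norm_num) (by positivity)
    have hnt : ‖(t : ℂ)‖ = t := by
      rw [Complex.norm_real]; exact Real.norm_of_nonneg htpos.le
    have h1 : 0 < ‖(t:ℂ)‖ := by rw [hnt]; exact htpos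
    have h2 : ‖(t:ℂ)‖ < 2⁻¹ := by
      rw [hnt]; exact lt_of_le_of_lt (min_le_left _ _) (by norm_num)
    have hk := key _ h1 h2
    have : f 0 = -((t:ℂ) * ∑' n, f (n + 1) * (t:ℂ) ^ n) := by linear_combination hk
    have hb : ‖f 0‖ ≤ t * (2 * M) := by
      rw [this, norm_neg, norm_mul, hnt]
      exact mul_le_mul_of_nonneg_left (tailbound _ h2) htpos.le
    have ht2 : t ≤ ‖f 0‖ / (2 * M + 1) := min_le_right _ _
    have : t * (2 * M) < ‖f 0‖ := by
      calc t * (2 * M) ≤ (‖f 0‖ / (2 * M + 1)) * (2 * M) :=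
            mul_le_mul_of_nonneg_right ht2 (by linarith)
      _ < ‖f 0‖ := by
            rw [div_mul_eq_mul_div, div_lt_iff₀ (by linarith)]
            nlinarith
    linarith
  refine ⟨h0, fun z h1 h2 => ?_⟩
  have hk := key z h1 h2
  rw [h0, zero_add] at hk
  rcases mul_eq_zero.mp hk with h | h
  · exact absurd h (by simpa [norm_pos_iff] using h1)
  · exact h

lemma coeffs_eq_zero : ∀ (n : ℕ) (f : ℕ → ℂ) (M : ℝ), (∀ k, ‖f k‖ ≤ M) →
    (∀ z : ℂ, 0 < ‖z‖ → ‖z‖ < 2⁻¹ → ∑' k, f k * z ^ k = 0) → f n = 0 := by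
  intro n
  induction n with
  | zero => exact fun f M hM h => (vanish_step f M hM h).1
  | succ n ih => exact fun f M hM h => ih (fun k => f (k + 1)) M (fun k => hM _) (vanish_step f M hM h).2





lemma coord_bound (f : H2) (n : ℕ) : ‖f n‖ ≤ ‖f‖ :=
  lp.norm_apply_le_norm (by norm_num) f n

lemma toFun_zero_eq (f : H2) : H2.toFun f 0 = f 0 := by
  unfold H2.toFun
  rw [tsum_eq_single 0]
  · simp
  · intro n hn
    simp [zero_pow hn]

lemma mk_coord (g : ℕ → ℂ) (hg : Memℓp g 2) (n : ℕ) : ((⟨g, hg⟩ : H2) : ∀ _ : ℕ, ℂ) n = g n := rfl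

lemma toFun_ext (f g : H2) (h : ∀ z ∈ ball (0:ℂ) 1, H2.toFun f z = H2.toFun g z) : f = g := by
  have key : ∀ n, f n - g n = 0 := by
    intro n
    refine coeffs_eq_zero n (fun k => f k - g k) (‖f‖ + ‖g‖) (fun k => ?_) (fun z h1 h2 => ?_)
    · exact (norm_sub_le _ _).trans (add_le_add (coord_bound f k) (coord_bound g k))
    · have hz1 : ‖z‖ < 1 := h2.trans (by norm_num)
      have hsf : Summable fun n => f n * z ^ n :=
        (summable_norm_cmp _ ‖f‖ (coord_bound f) hz1).of_norm
      have hsg : Summable fun n => g n * z ^ n :=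
        (summable_norm_cmp _ ‖g‖ (coord_bound g) hz1).of_norm
      have : ∑' k, (f k - g k) * z ^ k = H2.toFun f z - H2.toFun g z := by
        unfold H2.toFun
        rw [← Summable.tsum_sub hsf hsg]
        exact tsum_congr fun k => by ring
      rw [this, h z (mem_ball_zero_iff.mpr hz1), sub_self]
  apply lp.ext
  funext n
  have := key n
  have h2 : (f : ∀ _ : ℕ, ℂ) n = g n := by linear_combination this
  exact h2

lemma toFun_smul (c : ℂ) (f : H2) (z : ℂ) : H2.toFun (c • f) z = c * H2.toFun f z := by
  unfold H2.toFun
  rw [← tsum_mul_left]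
  refine tsum_congr fun n => ?_
  rw [lp.coeFn_smul]
  simp [smul_eq_mul]
  ring




noncomputable def eig (b : ℕ → ℂ) (α : ℂ) (p : ℕ) : ℕ → ℂ
  | m =>
    if _h : m < p then 0
    else if _h2 : m = p then 1
    else (∑ k ∈ (Finset.range m).attach,
        b (m - k.1) * α ^ k.1 * eig b α p k.1) / (b 0 * (α ^ p - α ^ m))
  decreasing_by exact Finset.mem_range.mp k.2

variable {b : ℕ → ℂ} {α : ℂ} {p : ℕ}

lemma eig_lt (b : ℕ → ℂ) (α : ℂ) {p m : ℕ} (h : m < p) : eig b α p m = 0 := by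
  rw [eig]
  simp [h]

lemma eig_self (b : ℕ → ℂ) (α : ℂ) (p : ℕ) : eig b α p p = 1 := by
  rw [eig]
  simp

lemma eig_gt (b : ℕ → ℂ) (α : ℂ) {p m : ℕ} (h : p < m) :
    eig b α p m = (∑ k ∈ Finset.range m, b (m - k) * α ^ k * eig b α p k) /
      (b 0 * (α ^ p - α ^ m)) := by
  rw [eig]
  rw [dif_neg (by omega), dif_neg (by omega)]
  congr 1
  exact Finset.sum_attach (Finset.range m) (fun k => b (m - k) * α ^ k * eig b α p k)

lemma denom_ne (hb0 : b 0 ≠ 0) (hα0 : α ≠ 0) (hα1 : ‖α‖ < 1) {m : ℕ} (h : p ≠ m) :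
    b 0 * (α ^ p - α ^ m) ≠ 0 := by
  have hr0 : 0 < ‖α‖ := norm_pos_iff.mpr hα0
  have key : ∀ i j : ℕ, i < j → α ^ j ≠ α ^ i := by
    intro i j hij heq
    have : ‖α ^ j‖ < ‖α ^ i‖ := by
      rw [norm_pow, norm_pow]
      exact pow_lt_pow_right_of_lt_one₀ hr0 hα1 hij
    rw [heq] at this
    exact lt_irrefl _ this
  refine mul_ne_zero hb0 (sub_ne_zero.mpr ?_)
  rcases lt_or_gt_of_ne h with h | h
  · exact fun heq => key p m h heq.symm
  · exact key m p h
  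




variable {b : ℕ → ℂ} {α : ℂ} {p : ℕ}

lemma eig_key (hb0 : b 0 ≠ 0) (hα0 : α ≠ 0) (hα1 : ‖α‖ < 1) (m : ℕ) :
    ∑ k ∈ Finset.range (m + 1), b (m - k) * α ^ k * eig b α p k
      = (b 0 * α ^ p) * eig b α p m := by
  rw [Finset.sum_range_succ]
  rcases lt_trichotomy m p with h | h | h
  · rw [eig_lt b α h, Finset.sum_eq_zero, mul_zero, mul_zero]
    · simp
    · intro k hk
      rw [eig_lt b α ((Finset.mem_range.mp hk).trans h), mul_zero]
  · subst h
    rw [eig_self, Finset.sum_eq_zero]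
    · simp [Nat.sub_self]
    · intro k hk
      rw [eig_lt b α (Finset.mem_range.mp hk), mul_zero]
  · have hd := denom_ne hb0 hα0 hα1 h.ne
    have he := eig_gt b α h
    have hsum : ∑ k ∈ Finset.range m, b (m - k) * α ^ k * eig b α p k
        = eig b α p m * (b 0 * (α ^ p - α ^ m)) := by
      rw [he, div_mul_cancel₀ _ hd]
    rw [hsum, Nat.sub_self]
    ring





section bounds

variable {b : ℕ → ℂ} {α : ℂ} {p : ℕ} {A : ℝ}
  (hb0 : b 0 ≠ 0) (hα0 : α ≠ 0) (hα1 : ‖α‖ < 1) (hA : ∀ n, ‖b n‖ ≤ A)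

-- abbreviation for the denominator lower bound
lemma hD_pos (hb0 : b 0 ≠ 0) (hα0 : α ≠ 0) (hα1 : ‖α‖ < 1) :
    0 < ‖b 0‖ * (‖α‖ ^ p * (1 - ‖α‖)) := by
  have h1 : 0 < ‖b 0‖ := norm_pos_iff.mpr hb0
  have h2 : 0 < ‖α‖ := norm_pos_iff.mpr hα0
  have h3 : 0 < 1 - ‖α‖ := by linarith
  positivity

lemma denom_lb (hα0 : α ≠ 0) (hα1 : ‖α‖ < 1) {m : ℕ} (h : p < m) :
    ‖b 0‖ * (‖α‖ ^ p * (1 - ‖α‖)) ≤ ‖b 0 * (α ^ p - α ^ m)‖ := by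
  rw [norm_mul]
  refine mul_le_mul_of_nonneg_left ?_ (norm_nonneg _)
  have h1 : ‖α ^ p‖ - ‖α ^ m‖ ≤ ‖α ^ p - α ^ m‖ := norm_sub_norm_le _ _
  have h2 : ‖α‖ ^ m ≤ ‖α‖ ^ (p + 1) :=
    pow_le_pow_of_le_one (norm_nonneg α) hα1.le h
  rw [norm_pow, norm_pow] at h1
  nlinarith [pow_nonneg (norm_nonneg α) p, pow_succ ‖α‖ p]

/-- partial geometric sums are bounded -/
lemma geom_partial (hα0 : α ≠ 0) (hα1 : ‖α‖ < 1) (s : Finset ℕ) :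
    ∑ k ∈ s, ‖α‖ ^ k ≤ (1 - ‖α‖)⁻¹ := by
  have := Summable.sum_le_tsum s (fun i _ => pow_nonneg (norm_nonneg α) i)
    (summable_geometric_of_lt_one (norm_nonneg α) hα1)
  rwa [tsum_geometric_of_lt_one (norm_nonneg α) hα1] at this

include hb0 hα0 hα1 hA in
lemma eig_sum_bound {m : ℕ} (h : p < m) :
    ‖eig b α p m‖ ≤ (A / (‖b 0‖ * (‖α‖ ^ p * (1 - ‖α‖)))) *
      ∑ k ∈ Finset.range m, ‖α‖ ^ k * ‖eig b α p k‖ := by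
  set D := ‖b 0‖ * (‖α‖ ^ p * (1 - ‖α‖)) with hD
  have hDpos : 0 < D := hD_pos hb0 hα0 hα1
  have hA0 : 0 ≤ A := le_trans (norm_nonneg _) (hA 0)
  rw [eig_gt b α h, norm_div, div_mul_eq_mul_div]
  refine div_le_div₀ (by positivity) ?_ hDpos (denom_lb hα0 hα1 h)
  refine (norm_sum_le _ _).trans ?_
  rw [Finset.mul_sum]
  refine Finset.sum_le_sum fun k _ => ?_
  rw [norm_mul, norm_mul, norm_pow]
  calc ‖b (m - k)‖ * ‖α‖ ^ k * ‖eig b α p k‖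
      ≤ A * ‖α‖ ^ k * ‖eig b α p k‖ := by
        refine mul_le_mul_of_nonneg_right (mul_le_mul_of_nonneg_right (hA _) ?_) (norm_nonneg _)
        positivity
    _ = A * (‖α‖ ^ k * ‖eig b α p k‖) := by ring

include hb0 hα0 hα1 hA in
lemma S_bound : ∀ m : ℕ, ∑ k ∈ Finset.range (m + 1), ‖α‖ ^ k * ‖eig b α p k‖ ≤
    Real.exp ((A / (‖b 0‖ * (‖α‖ ^ p * (1 - ‖α‖)))) * (1 - ‖α‖)⁻¹) := by
  set D := ‖b 0‖ * (‖α‖ ^ p * (1 - ‖α‖)) with hD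
  have hDpos : 0 < D := hD_pos hb0 hα0 hα1
  have hA0 : 0 ≤ A := le_trans (norm_nonneg _) (hA 0)
  have hq0 : 0 ≤ A / D := by positivity
  have main : ∀ m : ℕ, ∑ k ∈ Finset.range (m + 1), ‖α‖ ^ k * ‖eig b α p k‖ ≤
      Real.exp ((A / D) * ∑ k ∈ Finset.range (m + 1), ‖α‖ ^ k) := by
    intro m
    induction m with
    | zero =>
      simp only [Nat.zero_add, Finset.sum_range_one, pow_zero, one_mul]
      rcases Nat.eq_zero_or_pos p with hp | hp
      · subst hp
        rw [eig_self, norm_one]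
        exact Real.one_le_exp (mul_nonneg hq0 zero_le_one)
      · rw [eig_lt b α hp]
        simp only [norm_zero]
        positivity
    | succ m ih =>
      rw [Finset.sum_range_succ]
      rcases lt_trichotomy (m + 1) p with h | h | h
      · rw [eig_lt b α h]
        simp only [norm_zero, mul_zero, add_zero]
        refine ih.trans (Real.exp_le_exp.mpr (mul_le_mul_of_nonneg_left ?_ hq0))
        exact Finset.sum_le_sum_of_subset_of_nonneg
          (Finset.range_subset_range.mpr (by omega)) (fun i _ _ => by positivity)
      · -- m + 1 = p : all previous terms vanish
        have hzero : ∑ k ∈ Finset.range (m + 1), ‖α‖ ^ k * ‖eig b α p k‖ = 0 := by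
          refine Finset.sum_eq_zero fun k hk => ?_
          have hk' := Finset.mem_range.mp hk
          rw [eig_lt b α (by omega : k < p), norm_zero, mul_zero]
        rw [hzero, h, eig_self, zero_add, norm_one, mul_one]
        refine le_trans (pow_le_one₀ (norm_nonneg α) hα1.le) (Real.one_le_exp ?_)
        have : (0:ℝ) ≤ ∑ k ∈ Finset.range (p+1 ), ‖α‖ ^ k :=
          Finset.sum_nonneg fun k _ => by positivity
        rw [← h]
        positivity
      · -- m + 1 > p
        have hb := eig_sum_bound hb0 hα0 hα1 hA h
        set S := ∑ k ∈ Finset.range (m + 1), ‖α‖ ^ k * ‖eig b α p k‖ with hS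
        have hS0 : 0 ≤ S := Finset.sum_nonneg fun k _ => by positivity
        have step1 : S + ‖α‖ ^ (m+1) * ‖eig b α p (m+1)‖ ≤ S * (1 + (A/D) * ‖α‖ ^ (m+1)) := by
          have h1 : ‖α‖ ^ (m+1) * ‖eig b α p (m+1)‖ ≤ ‖α‖ ^ (m+1) * ((A/D) * S) :=
            mul_le_mul_of_nonneg_left (hb.trans_eq rfl) (by positivity)
          nlinarith
        have step2 : S * (1 + (A/D) * ‖α‖ ^ (m+1)) ≤
            Real.exp ((A/D) * ∑ k ∈ Finset.range (m+1), ‖α‖ ^ k) *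
            Real.exp ((A/D) * ‖α‖ ^ (m+1)) := by
          refine mul_le_mul ih ?_ (by positivity) (Real.exp_nonneg _)
          have := Real.add_one_le_exp ((A/D) * ‖α‖ ^ (m+1))
          linarith
        rw [← Real.exp_add] at step2
        refine (step1.trans step2).trans_eq ?_
        congr 1
        rw [show ∑ k ∈ Finset.range (m + 1 + 1), ‖α‖ ^ k
            = ∑ k ∈ Finset.range (m + 1), ‖α‖ ^ k + ‖α‖ ^ (m+1) from Finset.sum_range_succ _ _]
        ring
  intro m
  refine (main m).trans (Real.exp_le_exp.mpr (mul_le_mul_of_nonneg_left ?_ hq0))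
  exact geom_partial hα0 hα1 _

end bounds





section bounds2

variable {b : ℕ → ℂ} {α : ℂ} {p : ℕ} {A : ℝ}
  (hb0 : b 0 ≠ 0) (hα0 : α ≠ 0) (hα1 : ‖α‖ < 1) (hA : ∀ n, ‖b n‖ ≤ A)

include hb0 hα0 hα1 hA in
lemma eig_glob_bound : ∀ m : ℕ, ‖eig b α p m‖ ≤
    max 1 ((A / (‖b 0‖ * (‖α‖ ^ p * (1 - ‖α‖)))) *
      Real.exp ((A / (‖b 0‖ * (‖α‖ ^ p * (1 - ‖α‖)))) * (1 - ‖α‖)⁻¹)) := by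
  intro m
  rcases lt_trichotomy m p with h | h | h
  · rw [eig_lt b α h, norm_zero]
    exact le_trans zero_le_one (le_max_left _ _)
  · rw [h, eig_self, norm_one]; exact le_max_left _ _
  · refine le_trans ?_ (le_max_right _ _)
    have hDpos : 0 < ‖b 0‖ * (‖α‖ ^ p * (1 - ‖α‖)) := hD_pos hb0 hα0 hα1
    have hA0 : 0 ≤ A := le_trans (norm_nonneg _) (hA 0)
    obtain ⟨n, rfl⟩ : ∃ n, m = n + 1 := ⟨m - 1, by omega⟩
    refine (eig_sum_bound hb0 hα0 hα1 hA h).trans ?_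
    exact mul_le_mul_of_nonneg_left (S_bound hb0 hα0 hα1 hA n) (by positivity)

set_option maxHeartbeats 2000000 in
include hb0 hα0 hα1 hA in
lemma eig_memℓp (hB2 : Summable fun n => ‖b n‖ ^ (2:ℕ)) : Memℓp (eig b α p) 2 := by
  set D := ‖b 0‖ * (‖α‖ ^ p * (1 - ‖α‖)) with hD
  have hDpos : 0 < D := hD_pos hb0 hα0 hα1
  have hA0 : 0 ≤ A := le_trans (norm_nonneg _) (hA 0)
  set r := ‖α‖ with hr
  have hr0 : 0 < r := norm_pos_iff.mpr hα0
  set G := max 1 ((A / D) * Real.exp ((A / D) * (1 - r)⁻¹)) with hG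
  have hG1 : (1:ℝ) ≤ G := le_max_left _ _
  have hG0 : (0:ℝ) ≤ G := zero_le_one.trans hG1
  have hGb : ∀ m, ‖eig b α p m‖ ≤ G := eig_glob_bound hb0 hα0 hα1 hA
  -- step 1 : coefficient bound by convolution
  have step1 : ∀ m, p < m → ‖eig b α p m‖ ≤
      (G / D) * ∑ k ∈ Finset.range m, r ^ k * ‖b (m - k)‖ := by
    intro m h
    rw [eig_gt b α h, norm_div, div_mul_eq_mul_div]
    refine div_le_div₀ (by positivity) ?_ hDpos (denom_lb hα0 hα1 h)
    refine (norm_sum_le _ _).trans ?_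
    rw [Finset.mul_sum]
    refine Finset.sum_le_sum fun k _ => ?_
    rw [norm_mul, norm_mul, norm_pow]
    calc ‖b (m - k)‖ * ‖α‖ ^ k * ‖eig b α p k‖ ≤ ‖b (m - k)‖ * ‖α‖ ^ k * G :=
          mul_le_mul_of_nonneg_left (hGb k) (by positivity)
      _ = G * (r ^ k * ‖b (m - k)‖) := by rw [hr]; ring
  -- step 2 : Cauchy-Schwarz
  have step2 : ∀ m, (∑ k ∈ Finset.range m, r ^ k * ‖b (m - k)‖) ^ 2 ≤
      (1 - r)⁻¹ * ∑ k ∈ Finset.range (m + 1), r ^ k * ‖b (m - k)‖ ^ 2 := by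
    intro m
    have cs := Finset.sum_mul_sq_le_sq_mul_sq (Finset.range m)
      (fun k => Real.sqrt (r ^ k)) (fun k => Real.sqrt (r ^ k) * ‖b (m - k)‖)
    have he : ∀ k, Real.sqrt (r ^ k) * (Real.sqrt (r ^ k) * ‖b (m - k)‖)
        = r ^ k * ‖b (m - k)‖ := by
      intro k
      rw [← mul_assoc, Real.mul_self_sqrt (pow_nonneg hr0.le k)]
    have he2 : ∀ k, Real.sqrt (r ^ k) ^ 2 = r ^ k := fun k => Real.sq_sqrt (pow_nonneg hr0.le k)
    have he3 : ∀ k, (Real.sqrt (r ^ k) * ‖b (m - k)‖) ^ 2 = r ^ k * ‖b (m - k)‖ ^ 2 := by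
      intro k
      rw [mul_pow, he2]
    rw [Finset.sum_congr rfl (fun k _ => he k)] at cs
    rw [Finset.sum_congr rfl (fun k _ => he2 k)] at cs
    rw [Finset.sum_congr rfl (fun k _ => he3 k)] at cs
    refine cs.trans ?_
    refine mul_le_mul (geom_partial hα0 hα1 _) ?_
      (Finset.sum_nonneg fun k _ => mul_nonneg (pow_nonneg hr0.le k) (by positivity))
      (inv_nonneg.mpr (by linarith))
    exact Finset.sum_le_sum_of_subset_of_nonneg
      (Finset.range_subset_range.mpr (by omega))
      (fun i _ _ => mul_nonneg (pow_nonneg hr0.le i) (by positivity))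
  -- step 3 : summability of the convolution majorant
  have step3 : Summable fun m => ∑ k ∈ Finset.range (m + 1), r ^ k * ‖b (m - k)‖ ^ 2 := by
    have hf : Summable fun k : ℕ => ‖r ^ k‖ := by
      simp only [norm_pow, Real.norm_eq_abs, abs_of_pos hr0]
      exact summable_geometric_of_lt_one hr0.le hα1
    have hg : Summable fun j : ℕ => ‖‖b j‖ ^ (2:ℕ)‖ := by
      refine hB2.abs.congr fun j => ?_
      rw [Real.norm_eq_abs]
    have := summable_norm_sum_mul_range_of_summable_norm hf hg
    refine this.of_norm.congr fun m => ?_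
    exact Finset.sum_congr rfl fun k _ => rfl
  -- step 4 : summability of ‖eig‖²
  have step4 : Summable fun m => ‖eig b α p m‖ ^ (2:ℕ) := by
    refine Summable.of_nonneg_of_le (fun m => by positivity) (fun m => ?_)
      (((step3.mul_left ((1 - r)⁻¹)).mul_left ((G / D) ^ 2)).add
        (summable_of_ne_finset_zero (s := Finset.range (p + 1))
          (f := fun m => if m ≤ p then (1:ℝ) else 0)
          (fun m hm => if_neg (by simp at hm; omega))))
    rcases le_or_gt m p with h | h
    · have h1 : ‖eig b α p m‖ ≤ 1 := by
        rcases lt_or_eq_of_le h with h' | h'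
        · rw [eig_lt b α h', norm_zero]; exact zero_le_one
        · rw [h', eig_self, norm_one]
      have h2 : (0:ℝ) ≤ (G / D) ^ 2 * ((1 - r)⁻¹ *
          ∑ k ∈ Finset.range (m + 1), r ^ k * ‖b (m - k)‖ ^ 2) := by
        have : (0:ℝ) ≤ ∑ k ∈ Finset.range (m + 1), r ^ k * ‖b (m - k)‖ ^ 2 :=
          Finset.sum_nonneg fun k _ => mul_nonneg (pow_nonneg hr0.le k) (by positivity)
        have h3 : (0:ℝ) ≤ (1 - r)⁻¹ := inv_nonneg.mpr (by linarith)
        positivity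
      rw [if_pos h]
      nlinarith [norm_nonneg (eig b α p m)]
    · rw [if_neg (by omega), add_zero]
      have h1 := step1 m h
      have h2 := step2 m
      have h3 : ‖eig b α p m‖ ^ 2 ≤ ((G / D) *
          ∑ k ∈ Finset.range m, r ^ k * ‖b (m - k)‖) ^ 2 := by
        have hs : (0:ℝ) ≤ ∑ k ∈ Finset.range m, r ^ k * ‖b (m - k)‖ :=
          Finset.sum_nonneg fun k _ => mul_nonneg (pow_nonneg hr0.le k) (by positivity)
        exact pow_le_pow_left₀ (norm_nonneg _) h1 2
      refine h3.trans ?_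
      rw [mul_pow]
      exact mul_le_mul_of_nonneg_left h2 (by positivity)
  apply memℓp_gen
  refine step4.congr fun m => ?_
  rw [ENNReal.toReal_ofNat, Real.rpow_two]

end bounds2





lemma cauchy_prod (b g : ℕ → ℂ) (Ab G : ℝ) (hAb : ∀ n, ‖b n‖ ≤ Ab) (hG : ∀ n, ‖g n‖ ≤ G)
    (α : ℂ) (hα1 : ‖α‖ ≤ 1) {z : ℂ} (hz : ‖z‖ < 1) :
    (∑' k, b k * z ^ k) * (∑' k, g k * (α * z) ^ k)
      = ∑' m, (∑ k ∈ Finset.range (m + 1), b (m - k) * α ^ k * g k) * z ^ m := by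
  have hG0 : 0 ≤ G := le_trans (norm_nonneg _) (hG 0)
  have hgα : ∀ k, ‖g k * α ^ k‖ ≤ G := by
    intro k
    rw [norm_mul, norm_pow]
    calc ‖g k‖ * ‖α‖ ^ k ≤ G * 1 :=
      mul_le_mul (hG k) (pow_le_one₀ (norm_nonneg α) hα1) (by positivity) hG0
    _ = G := mul_one G
  have h1 : (∑' k, g k * (α * z) ^ k) = ∑' k, (g k * α ^ k) * z ^ k :=
    tsum_congr fun k => by rw [mul_pow]; ring
  rw [h1]
  rw [tsum_mul_tsum_eq_tsum_sum_range_of_summable_norm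
    (summable_norm_cmp b Ab hAb hz) (summable_norm_cmp _ G hgα hz)]
  refine tsum_congr fun n => ?_
  rw [← Finset.sum_range_reflect (fun j => (b j * z ^ j) * ((g (n - j) * α ^ (n - j)) * z ^ (n - j))) (n + 1)]
  rw [Finset.sum_mul]
  refine Finset.sum_congr rfl fun j hj => ?_
  have hjn : j ≤ n := by
    have := Finset.mem_range.mp hj; omega
  simp only [Nat.add_sub_cancel]
  rw [show n - (n - j) = j from by omega]
  have hzz : z ^ (n - j) * z ^ j = z ^ n := by
    rw [← pow_add, Nat.sub_add_cancel hjn]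
  calc b (n - j) * z ^ (n - j) * (g j * α ^ j * z ^ j)
      = b (n - j) * α ^ j * g j * (z ^ (n - j) * z ^ j) := by ring
    _ = b (n - j) * α ^ j * g j * z ^ n := by rw [hzz]



lemma solve_two (g₀ g₁ : H2) (h0 : g₀ ≠ 0)
    (hind : ∀ a : ℂ, g₁ = a • g₀ → False) (s t : ℂ) :
    ∃ w : H2, ⟪g₀, w⟫ = s ∧ ⟪g₁, w⟫ = t := by
  have hd₀ : ⟪g₀, g₀⟫ ≠ 0 := inner_self_ne_zero.mpr h0
  set d₀ : ℂ := ⟪g₀, g₀⟫ with hd₀def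
  set d₁ : ℂ := ⟪g₁, g₁⟫ with hd₁def
  set c : ℂ := ⟪g₀, g₁⟫ with hcdef
  set c' : ℂ := ⟪g₁, g₀⟫ with hc'def
  set P : H2 := g₁ - (c / d₀) • g₀ with hPdef
  have hP : P ≠ 0 := by
    intro h
    exact hind (c / d₀) (by rwa [hPdef, sub_eq_zero] at h)
  have hg₀P : ⟪g₀, P⟫ = 0 := by
    rw [hPdef, inner_sub_right, inner_smul_right]
    rw [← hcdef, ← hd₀def]
    field_simp
    ring
  have hg₁P : ⟪g₁, P⟫ = ⟪P, P⟫ := by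
    have h1 : ⟪g₁, P⟫ - ⟪P, P⟫ = ⟪g₁ - P, P⟫ := (inner_sub_left _ _ _).symm
    have h2 : g₁ - P = (c / d₀) • g₀ := by rw [hPdef]; abel
    rw [h2, inner_smul_left, hg₀P, mul_zero] at h1
    linear_combination h1
  have hg₁P' : ⟪g₁, P⟫ = d₁ - (c / d₀) * c' := by
    rw [hPdef, inner_sub_right, inner_smul_right, ← hd₁def, ← hc'def]
  have hPP : ⟪P, P⟫ ≠ 0 := inner_self_ne_zero.mpr hP
  have hdet : d₀ * d₁ - c * c' ≠ 0 := by
    have : d₀ * d₁ - c * c' = d₀ * ⟪P, P⟫ := by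
      rw [← hg₁P, hg₁P']
      field_simp
    rw [this]
    exact mul_ne_zero hd₀ hPP
  refine ⟨((s * d₁ - t * c) / (d₀ * d₁ - c * c')) • g₀ +
    ((t * d₀ - s * c') / (d₀ * d₁ - c * c')) • g₁, ?_, ?_⟩
  · rw [inner_add_right, inner_smul_right, inner_smul_right, ← hd₀def, ← hcdef]
    field_simp
    rw [div_eq_iff (by rw [mul_comm d₁ d₀]; exact hdet)]
    ring
  · rw [inner_add_right, inner_smul_right, inner_smul_right, ← hc'def, ← hd₁def]
    field_simp
    rw [div_eq_iff (by rw [mul_comm d₁ d₀]; exact hdet)]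
    ring

set_option maxHeartbeats 2000000 in
theorem stmt19 (lam : ℂ) (hlam0 : lam ≠ 0) (hlam1 : ‖lam‖ < 1)
    (φ : H2) (hφ0 : H2.toFun φ 0 ≠ 0)
    (T : H2 →L[ℂ] H2)
    (hT : ∀ f : H2, ∀ z ∈ ball (0:ℂ) 1,
      H2.toFun (ContinuousLinearMap.adjoint T f) z
        = conjSymb (H2.toFun φ) z * H2.toFun f (conj lam * z)) :
    ¬ Supercyclic T := by
  classical
  rintro ⟨x, hx⟩
  set α : ℂ := conj lam with hαdef
  have hα0 : α ≠ 0 := by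
    rw [hαdef]
    simpa using hlam0
  have hα1 : ‖α‖ < 1 := by rw [hαdef, RCLike.norm_conj]; exact hlam1
  set b : ℕ → ℂ := fun n => conj (φ n) with hbdef
  have hbA : ∀ n, ‖b n‖ ≤ ‖φ‖ := fun n => by
    rw [hbdef]
    simpa [RCLike.norm_conj] using coord_bound φ n
  have hφ00 : (φ : ∀ _ : ℕ, ℂ) 0 ≠ 0 := by rw [← toFun_zero_eq φ]; exact hφ0
  have hb0 : b 0 ≠ 0 := by
    rw [hbdef]
    simpa using hφ00
  have hφ2 : Summable fun n => ‖φ n‖ ^ ENNReal.toReal 2 := (lp.memℓp φ).summable (by norm_num)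
  have hB2 : Summable fun n => ‖b n‖ ^ (2:ℕ) := by
    refine hφ2.congr fun n => ?_
    simp only [hbdef, RCLike.norm_conj, ENNReal.toReal_ofNat, Real.rpow_two]
  have hψ : ∀ z : ℂ, conjSymb (H2.toFun φ) z = ∑' k, b k * z ^ k := by
    intro z
    unfold conjSymb H2.toFun
    rw [starRingEnd_apply, tsum_star]
    refine tsum_congr fun n => ?_
    rw [star_mul', star_pow]
    simp only [hbdef, starRingEnd_apply, star_star]
  have hGex : ∀ p : ℕ, ∃ G : ℝ, ∀ m, ‖eig b α p m‖ ≤ G :=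
    fun p => ⟨_, eig_glob_bound hb0 hα0 hα1 hbA⟩
  have hmem : ∀ p : ℕ, Memℓp (eig b α p) 2 := fun p => eig_memℓp hb0 hα0 hα1 hbA hB2
  set gv : ℕ → H2 := fun p => (⟨eig b α p, hmem p⟩ : H2) with hgvdef
  have hcoord : ∀ p m, (gv p : ∀ _ : ℕ, ℂ) m = eig b α p m := fun p m => rfl
  -- the eigenvector equation
  have heig : ∀ p : ℕ, ContinuousLinearMap.adjoint T (gv p) = (b 0 * α ^ p) • gv p := by
    intro p
    obtain ⟨G, hG⟩ := hGex p
    refine toFun_ext _ _ fun z hz => ?_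
    have hz1 : ‖z‖ < 1 := mem_ball_zero_iff.mp hz
    rw [hT (gv p) z hz, toFun_smul]
    have h1 : H2.toFun (gv p) (α * z) = ∑' k, eig b α p k * (α * z) ^ k := rfl
    have h2 : H2.toFun (gv p) z = ∑' k, eig b α p k * z ^ k := rfl
    rw [hψ z, h1, h2]
    rw [cauchy_prod b (eig b α p) ‖φ‖ G hbA hG α hα1.le hz1]
    rw [← tsum_mul_left]
    refine tsum_congr fun m => ?_
    rw [eig_key hb0 hα0 hα1 m]
    ring
  -- the iterated functional equation
  have hiter : ∀ (p : ℕ) (n : ℕ) (y : H2),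
      ⟪gv p, (T ^ n) y⟫ = (conj (b 0 * α ^ p)) ^ n * ⟪gv p, y⟫ := by
    intro p n
    induction n with
    | zero => intro y; simp
    | succ n ih =>
      intro y
      rw [pow_succ, ContinuousLinearMap.mul_apply, ih (T y),
        ← ContinuousLinearMap.adjoint_inner_left T y (gv p), heig p, inner_smul_left]
      ring
  -- nontriviality and independence of the two eigenvectors
  have hg0ne : gv 0 ≠ 0 := by
    intro h
    have h1 : (gv 0 : ∀ _ : ℕ, ℂ) 0 = (0 : H2) 0 := by rw [h]
    rw [hcoord, eig_self] at h1
    simp only [lp.coeFn_zero, Pi.zero_apply] at h1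
    exact one_ne_zero h1
  have hind : ∀ a : ℂ, gv 1 = a • gv 0 → False := by
    intro a h
    have h0 : eig b α 1 0 = a * eig b α 0 0 := by
      have := congrArg (fun f : H2 => (f : ∀ _ : ℕ, ℂ) 0) h
      simpa [hcoord, lp.coeFn_smul] using this
    have h1 : eig b α 1 1 = a * eig b α 0 1 := by
      have := congrArg (fun f : H2 => (f : ∀ _ : ℕ, ℂ) 1) h
      simpa [hcoord, lp.coeFn_smul] using this
    rw [eig_lt b α zero_lt_one, eig_self] at h0
    rw [eig_self] at h1
    have ha : a = 0 := by linear_combination -h0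
    rw [ha] at h1
    simp at h1
  -- the two linear functionals on the orbit
  set u : ℂ := ⟪gv 0, x⟫ with hudef
  set v : ℂ := ⟪gv 1, x⟫ with hvdef
  have hc0 : conj (b 0 * α ^ 0) = conj (b 0) := by rw [pow_zero, mul_one]
  have hc1 : conj (b 0 * α ^ 1) = conj (b 0) * lam := by
    rw [pow_one, map_mul, hαdef]
    simp
  have hΛ0 : ∀ (μ : ℂ) (n : ℕ),
      ⟪gv 0, μ • (T ^ n) x⟫ = μ * ((conj (b 0)) ^ n * u) := by
    intro μ n
    rw [inner_smul_right, hiter 0 n x, hc0, ← hudef]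
  have hΛ1 : ∀ (μ : ℂ) (n : ℕ),
      ⟪gv 1, μ • (T ^ n) x⟫ = μ * ((conj (b 0)) ^ n * (lam ^ n * v)) := by
    intro μ n
    rw [inner_smul_right, hiter 1 n x, hc1, mul_pow, ← hvdef]
    ring
  -- approximation estimates
  have happrox : ∀ (g w y : H2), dist w y < 1 → ‖⟪g, w⟫ - ⟪g, y⟫‖ ≤ ‖g‖ * dist w y := by
    intro g w y _
    rw [← inner_sub_right, dist_eq_norm]
    exact norm_inner_le_norm g (w - y)
  by_cases hu : u = 0
  · -- first functional vanishes on x : contradiction with density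
    obtain ⟨w, hw0, _⟩ := solve_two (gv 0) (gv 1) hg0ne hind 1 0
    have hδ : (0:ℝ) < (2 * (1 + ‖gv 0‖))⁻¹ := by positivity
    obtain ⟨y, hyS, hyd⟩ := hx.exists_dist_lt w hδ
    obtain ⟨μ, n, rfl⟩ := hyS
    have h1 : ⟪gv 0, μ • (T ^ n) x⟫ = 0 := by rw [hΛ0 μ n, hu]; ring
    have h2 := happrox (gv 0) w (μ • (T ^ n) x)
      (hyd.trans_le (by rw [← inv_one]; exact inv_anti₀ one_pos (by nlinarith [norm_nonneg (gv 0)])))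
    rw [hw0, h1, sub_zero, norm_one] at h2
    have h3 : ‖gv 0‖ * dist w (μ • (T ^ n) x) < 1 := by
      have hle : ‖gv 0‖ * dist w (μ • (T ^ n) x) ≤ ‖gv 0‖ * (2 * (1 + ‖gv 0‖))⁻¹ :=
        mul_le_mul_of_nonneg_left hyd.le (norm_nonneg _)
      refine hle.trans_lt ?_
      rw [mul_inv_lt_iff₀ (by positivity)]
      nlinarith [norm_nonneg (gv 0)]
    linarith
  by_cases hv : v = 0
  · obtain ⟨w, _, hw1⟩ := solve_two (gv 0) (gv 1) hg0ne hind 0 1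
    have hδ : (0:ℝ) < (2 * (1 + ‖gv 1‖))⁻¹ := by positivity
    obtain ⟨y, hyS, hyd⟩ := hx.exists_dist_lt w hδ
    obtain ⟨μ, n, rfl⟩ := hyS
    have h1 : ⟪gv 1, μ • (T ^ n) x⟫ = 0 := by rw [hΛ1 μ n, hv]; ring
    have h2 := happrox (gv 1) w (μ • (T ^ n) x)
      (hyd.trans_le (by rw [← inv_one]; exact inv_anti₀ one_pos (by nlinarith [norm_nonneg (gv 1)])))
    rw [hw1, h1, sub_zero, norm_one] at h2
    have h3 : ‖gv 1‖ * dist w (μ • (T ^ n) x) < 1 := by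
      have hle : ‖gv 1‖ * dist w (μ • (T ^ n) x) ≤ ‖gv 1‖ * (2 * (1 + ‖gv 1‖))⁻¹ :=
        mul_le_mul_of_nonneg_left hyd.le (norm_nonneg _)
      refine hle.trans_lt ?_
      rw [mul_inv_lt_iff₀ (by positivity)]
      nlinarith [norm_nonneg (gv 1)]
    linarith
  · -- main case : both functionals non-vanishing on x
    have hu0 : 0 < ‖u‖ := norm_pos_iff.mpr hu
    have hv0 : 0 < ‖v‖ := norm_pos_iff.mpr hv
    set ρ : ℝ := ‖v‖ / ‖u‖ with hρdef
    have hρ0 : 0 < ρ := by positivity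
    set ε : ℝ := (2 * (1 + ρ))⁻¹ with hεdef
    have hε0 : 0 < ε := by positivity
    set K : ℝ := 1 + ‖gv 0‖ + ‖gv 1‖ with hKdef
    have hK0 : 0 < K := by positivity
    have hδ : (0:ℝ) < ε / K := by positivity
    obtain ⟨w, hw0, hw1⟩ := solve_two (gv 0) (gv 1) hg0ne hind 1 ((1 + ρ : ℝ) : ℂ)
    obtain ⟨y, hyS, hyd⟩ := hx.exists_dist_lt w hδ
    obtain ⟨μ, n, rfl⟩ := hyS
    have hdist1 : dist w (μ • (T ^ n) x) < 1 := by
      refine hyd.trans_le ?_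
      rw [div_le_one hK0, hεdef]
      calc (2 * (1 + ρ))⁻¹ ≤ 1 := by
            rw [← inv_one]
            exact inv_anti₀ one_pos (by nlinarith)
        _ ≤ K := by rw [hKdef]; nlinarith [norm_nonneg (gv 0), norm_nonneg (gv 1)]
    have hest0 : ‖(1:ℂ) - ⟪gv 0, μ • (T ^ n) x⟫‖ < ε := by
      have h2 := happrox (gv 0) w (μ • (T ^ n) x) hdist1
      rw [hw0] at h2
      refine h2.trans_lt ?_
      calc ‖gv 0‖ * dist w (μ • (T ^ n) x) ≤ ‖gv 0‖ * (ε / K) :=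
            mul_le_mul_of_nonneg_left hyd.le (norm_nonneg _)
        _ < ε := by
            rw [mul_div_assoc']
            rw [div_lt_iff₀ hK0]
            have : ‖gv 0‖ < K := by rw [hKdef]; nlinarith [norm_nonneg (gv 1)]
            nlinarith
    have hest1 : ‖((1 + ρ : ℝ) : ℂ) - ⟪gv 1, μ • (T ^ n) x⟫‖ < ε := by
      have h2 := happrox (gv 1) w (μ • (T ^ n) x) hdist1
      rw [hw1] at h2
      refine h2.trans_lt ?_
      calc ‖gv 1‖ * dist w (μ • (T ^ n) x) ≤ ‖gv 1‖ * (ε / K) :=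
            mul_le_mul_of_nonneg_left hyd.le (norm_nonneg _)
        _ < ε := by
            rw [mul_div_assoc']
            rw [div_lt_iff₀ hK0]
            have : ‖gv 1‖ < K := by rw [hKdef]; nlinarith [norm_nonneg (gv 0)]
            nlinarith
    -- norms of the two functional values
    have hn0 : ‖⟪gv 0, μ • (T ^ n) x⟫‖ = ‖μ * (conj (b 0)) ^ n‖ * ‖u‖ := by
      rw [hΛ0 μ n]
      rw [show μ * ((conj (b 0)) ^ n * u) = (μ * (conj (b 0)) ^ n) * u by ring]
      rw [norm_mul]
    have hn1 : ‖⟪gv 1, μ • (T ^ n) x⟫‖ = ‖μ * (conj (b 0)) ^ n‖ * (‖lam‖ ^ n * ‖v‖) := by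
      rw [hΛ1 μ n]
      rw [show μ * ((conj (b 0)) ^ n * (lam ^ n * v)) = (μ * (conj (b 0)) ^ n) * lam ^ n * v by ring]
      rw [norm_mul, norm_mul, norm_pow]
      ring
    set a : ℝ := ‖μ * (conj (b 0)) ^ n‖ with hadef
    have ha0 : 0 ≤ a := norm_nonneg _
    have hlamn : ‖lam‖ ^ n ≤ 1 := pow_le_one₀ (norm_nonneg _) hlam1.le
    have hlamn0 : 0 ≤ ‖lam‖ ^ n := by positivity
    -- bounds from the approximations
    have hb0' : ‖⟪gv 0, μ • (T ^ n) x⟫‖ ≤ 1 + ε := by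
      have h1 := norm_sub_norm_le ((1:ℂ)) (((1:ℂ)) - ⟪gv 0, μ • (T ^ n) x⟫)
      have h2 : (1:ℂ) - ((1:ℂ) - ⟪gv 0, μ • (T ^ n) x⟫) = ⟪gv 0, μ • (T ^ n) x⟫ := by ring
      rw [h2, norm_one] at h1
      have h3 := norm_sub_norm_le (⟪gv 0, μ • (T ^ n) x⟫) ((1:ℂ))
      have h4 := (norm_add_le ((1:ℂ)) (⟪gv 0, μ • (T ^ n) x⟫ - 1))
      have h5 : (1:ℂ) + (⟪gv 0, μ • (T ^ n) x⟫ - 1) = ⟪gv 0, μ • (T ^ n) x⟫ := by ring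
      rw [h5, norm_one] at h4
      have h6 : ‖⟪gv 0, μ • (T ^ n) x⟫ - 1‖ = ‖(1:ℂ) - ⟪gv 0, μ • (T ^ n) x⟫‖ := by
        rw [← norm_neg]; congr 1; ring
      rw [h6] at h4
      linarith [hest0]
    have hρnorm : ‖((1 + ρ : ℝ) : ℂ)‖ = 1 + ρ := by
      rw [Complex.norm_real]
      exact abs_of_pos (by linarith)
    have hb1' : 1 + ρ - ε ≤ ‖⟪gv 1, μ • (T ^ n) x⟫‖ := by
      have h1 := norm_sub_norm_le (((1 + ρ : ℝ) : ℂ)) (((1 + ρ : ℝ) : ℂ) - ⟪gv 1, μ • (T ^ n) x⟫)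
      have h2 : ((1 + ρ : ℝ) : ℂ) - (((1 + ρ : ℝ) : ℂ) - ⟪gv 1, μ • (T ^ n) x⟫)
          = ⟪gv 1, μ • (T ^ n) x⟫ := by ring
      rw [h2, hρnorm] at h1
      linarith [hest1]
    -- the decisive inequalities
    have hvρ : ‖v‖ = ρ * ‖u‖ := by rw [hρdef]; exact (div_mul_cancel₀ _ hu0.ne').symm
    have hchain : 1 + ρ - ε ≤ (1 + ε) * ρ := by
      have hA : (1 + ρ - ε) * ‖u‖ ≤ (a * (‖lam‖ ^ n * ‖v‖)) * ‖u‖ := by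
        have := hb1'
        rw [hn1] at this
        exact mul_le_mul_of_nonneg_right this hu0.le
      have hB : (a * (‖lam‖ ^ n * ‖v‖)) * ‖u‖ ≤ (a * ‖u‖) * ‖v‖ := by
        have h1 : a * (‖lam‖ ^ n * ‖v‖) * ‖u‖ = (a * ‖v‖ * ‖u‖) * ‖lam‖ ^ n := by ring
        have h2 : (a * ‖u‖) * ‖v‖ = (a * ‖v‖ * ‖u‖) * 1 := by ring
        rw [h1, h2]
        exact mul_le_mul_of_nonneg_left hlamn (by positivity)
      have hC : (a * ‖u‖) * ‖v‖ ≤ (1 + ε) * ‖v‖ := by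
        have := hb0'
        rw [hn0] at this
        exact mul_le_mul_of_nonneg_right this hv0.le
      have hD : (1 + ρ - ε) * ‖u‖ ≤ (1 + ε) * ‖v‖ := le_trans hA (le_trans hB hC)
      rw [hvρ, show (1 + ε) * (ρ * ‖u‖) = ((1 + ε) * ρ) * ‖u‖ from by ring] at hD
      exact le_of_mul_le_mul_right hD hu0
    have hεval : ε * (1 + ρ) = 2⁻¹ := by
      rw [hεdef]
      field_simp
    nlinarith [hchain, hεval, hε0, hρ0]


end SC19aux
end
end
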